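/- Assume (A1) r has all coordinates strictly positive and (A2) M_{ij} ≤ 0 for all i ≠ j. Then there exists ε₀ > 0 such that for all ε ∈ (0, ε₀], for every solution θ^{(ε)} : [0,∞) → ℝ^d of the DLN ODE dθ_i/dt = θ_i (r_i − (Mθ)_i) with initial condition θ_i^{(ε)}(0) = C_i ε^{k_i}, and for every i ∈ {1,…,d}, the function t ↦ θ_i^{(ε)}(t) is nondecreasing on [0,∞). -/

import Mathlib

open Matrix

open Set

/-- Key propagation lemma: under (A2), if `θ(0) > 0` and `g(0) = r - Mθ(0) > 0`
componentwise, then `θ` and `g` stay nonnegative for all `t ≥ 0`. -/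
private lemma dln_aux {d : ℕ} (M : Matrix (Fin d) (Fin d) ℝ) (r : Fin d → ℝ)
    (hA2 : ∀ i j, i ≠ j → M i j ≤ 0)
    (θ : ℝ → Fin d → ℝ)
    (hderiv : ∀ t ≥ (0:ℝ), ∀ i,
      HasDerivAt (fun τ => θ τ i) (θ t i * (r i - (M *ᵥ θ t) i)) t)
    (hθ0 : ∀ i, 0 < θ 0 i)
    (hg0 : ∀ i, 0 < r i - (M *ᵥ θ 0) i) :
    ∀ T ≥ (0:ℝ), ∀ i, 0 ≤ θ T i ∧ 0 ≤ r i - (M *ᵥ θ T) i := by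
  set g : ℝ → Fin d → ℝ := fun t i => r i - (M *ᵥ θ t) i with hgdef
  have hmv : ∀ t i, (M *ᵥ θ t) i = ∑ j, M i j * θ t j := by
    intro t i; simp [Matrix.mulVec, dotProduct]
  -- derivative of g
  have hgd : ∀ t ≥ (0:ℝ), ∀ i, HasDerivAt (fun τ => g τ i)
      (∑ j, -(M i j) * (θ t j * g t j)) t := by
    intro t ht i
    have hsum : HasDerivAt (fun τ => ∑ j, M i j * θ τ j)
        (∑ j, M i j * (θ t j * g t j)) t := by
      apply HasDerivAt.fun_sum
      intro j _
      exact (hderiv t ht j).const_mul (M i j)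
    have h := (hasDerivAt_const t (r i)).sub hsum
    have heq : (fun τ => g τ i) = fun τ => r i - ∑ j, M i j * θ τ j := by
      funext τ; simp [hgdef, hmv]
    rw [heq]
    convert h using 1
    · rfl
    · rfl
    · rfl
    rw [zero_sub, ← Finset.sum_neg_distrib]
    congr 1; funext j; ring
  have hcθ : ∀ t ≥ (0:ℝ), ∀ i, ContinuousAt (fun τ => θ τ i) t :=
    fun t ht i => (hderiv t ht i).continuousAt
  have hcg : ∀ t ≥ (0:ℝ), ∀ i, ContinuousAt (fun τ => g τ i) t :=
    fun t ht i => (hgd t ht i).continuousAt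
  -- strict positivity propagation on a compact interval
  have key : ∀ T, 0 ≤ T → (∀ t ∈ Icc (0:ℝ) T, ∀ i, 0 ≤ θ t i ∧ 0 ≤ g t i) →
      ∀ i, 0 < θ T i ∧ 0 < g T i := by
    intro T hT hQ i
    constructor
    · -- θ monotone on [0,T] since θ' = θ g ≥ 0 there
      have hmono : MonotoneOn (fun t => θ t i) (Icc 0 T) := by
        apply monotoneOn_of_hasDerivWithinAt_nonneg (convex_Icc 0 T)
          (f' := fun t => θ t i * g t i)
        · intro t ht
          exact ((hderiv t ht.1 i).continuousAt).continuousWithinAt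
        · intro x hx
          rw [interior_Icc] at hx
          exact ((hderiv x hx.1.le i)).hasDerivWithinAt
        · intro x hx
          rw [interior_Icc] at hx
          have := hQ x ⟨hx.1.le, hx.2.le⟩ i
          exact mul_nonneg this.1 this.2
      calc (0:ℝ) < θ 0 i := hθ0 i
        _ ≤ θ T i := hmono ⟨le_refl 0, hT⟩ ⟨hT, le_refl T⟩ hT
    · -- g: use v t = exp(L t) * g t i
      have hcθT : ContinuousOn (fun t => M i i * θ t i) (Icc 0 T) := by
        intro t ht
        exact (continuousAt_const.mul (hcθ t ht.1 i)).continuousWithinAt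
      obtain ⟨L, hL⟩ := isCompact_Icc.exists_bound_of_continuousOn hcθT
      have hLnn : 0 ≤ L := le_trans (norm_nonneg _) (hL 0 ⟨le_refl 0, hT⟩)
      have hvmono : MonotoneOn (fun t => Real.exp (L * t) * g t i) (Icc 0 T) := by
        apply monotoneOn_of_hasDerivWithinAt_nonneg (convex_Icc 0 T)
          (f' := fun t => Real.exp (L * t) * L * g t i +
            Real.exp (L * t) * (∑ j, -(M i j) * (θ t j * g t j)))
        · intro t ht
          have h1 : ContinuousAt (fun τ => Real.exp (L * τ)) t :=
            (Real.continuous_exp.comp (continuous_const.mul continuous_id)).continuousAt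
          exact (h1.mul (hcg t ht.1 i)).continuousWithinAt
        · intro x hx
          rw [interior_Icc] at hx
          have h1 : HasDerivAt (fun τ => Real.exp (L * τ)) (Real.exp (L * x) * L) x := by
            have := ((hasDerivAt_id x).const_mul L).exp
            simpa using this
          have h2 : HasDerivAt (fun τ => Real.exp (L * τ) * g τ i)
              (Real.exp (L * x) * L * g x i +
                Real.exp (L * x) * (∑ j, -(M i j) * (θ x j * g x j))) x := by
            exact h1.mul (hgd x hx.1.le i)
          exact h2.hasDerivWithinAt
        · intro x hx
          rw [interior_Icc] at hx
          have hQx := hQ x ⟨hx.1.le, hx.2.le⟩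
          have hexp : (0:ℝ) < Real.exp (L * x) := Real.exp_pos _
          have hMθ : |M i i * θ x i| ≤ L := by
            have := hL x ⟨hx.1.le, hx.2.le⟩
            rwa [Real.norm_eq_abs] at this
          have hsplit : (-(M i i)) * (θ x i * g x i) +
              ∑ j ∈ Finset.univ.erase i, -(M i j) * (θ x j * g x j) =
              ∑ j, -(M i j) * (θ x j * g x j) :=
            Finset.add_sum_erase Finset.univ (fun j => -(M i j) * (θ x j * g x j))
              (Finset.mem_univ i)
          have hrest : 0 ≤ ∑ j ∈ Finset.univ.erase i, -(M i j) * (θ x j * g x j) := by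
            apply Finset.sum_nonneg
            intro j hj
            have hji : j ≠ i := Finset.ne_of_mem_erase hj
            have hMij : M i j ≤ 0 := hA2 i j (Ne.symm hji)
            have := hQx j
            exact mul_nonneg (by linarith) (mul_nonneg this.1 this.2)
          have hii : -(L * g x i) ≤ (-(M i i)) * (θ x i * g x i) := by
            have hgx : 0 ≤ g x i := (hQx i).2
            have h1 : -(L) ≤ -(M i i * θ x i) := by
              have := abs_le.1 hMθ
              linarith [this.1]
            calc -(L * g x i) = (-(L)) * g x i := by ring
              _ ≤ (-(M i i * θ x i)) * g x i := mul_le_mul_of_nonneg_right h1 hgx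
              _ = (-(M i i)) * (θ x i * g x i) := by ring
          have hsum : -(L * g x i) ≤ ∑ j, -(M i j) * (θ x j * g x j) := by
            rw [← hsplit]; linarith
          have h4 : 0 ≤ L * g x i + ∑ j, -(M i j) * (θ x j * g x j) := by linarith
          calc (0:ℝ) ≤ Real.exp (L * x) * (L * g x i +
                ∑ j, -(M i j) * (θ x j * g x j)) := mul_nonneg hexp.le h4
            _ = Real.exp (L * x) * L * g x i +
                Real.exp (L * x) * (∑ j, -(M i j) * (θ x j * g x j)) := by ring
      have hmle := hvmono ⟨le_refl 0, hT⟩ ⟨hT, le_refl T⟩ hT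
      simp only [mul_zero, Real.exp_zero, one_mul] at hmle
      have hvT : 0 < Real.exp (L * T) * g T i := lt_of_lt_of_le (hg0 i) hmle
      have hexpT : (0:ℝ) < Real.exp (L * T) := Real.exp_pos _
      nlinarith [hexpT]
  -- continuous induction via sSup
  intro T₀ hT₀
  set A : Set ℝ := {T | T ∈ Icc (0:ℝ) T₀ ∧
    ∀ t ∈ Icc (0:ℝ) T, ∀ i, 0 ≤ θ t i ∧ 0 ≤ g t i} with hAdef
  have hA0 : (0:ℝ) ∈ A := by
    refine ⟨⟨le_refl 0, hT₀⟩, ?_⟩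
    intro t ht i
    have : t = 0 := le_antisymm ht.2 ht.1
    subst this
    exact ⟨(hθ0 i).le, (hg0 i).le⟩
  have hne : A.Nonempty := ⟨0, hA0⟩
  have hbdd : BddAbove A := ⟨T₀, fun x hx => hx.1.2⟩
  set c : ℝ := sSup A with hcdef
  have hc0 : 0 ≤ c := le_csSup hbdd hA0
  have hcT : c ≤ T₀ := csSup_le hne fun x hx => hx.1.2
  -- the closed "good" set
  set B : Set ℝ := {t | t ∈ Icc (0:ℝ) T₀ ∧ ∀ i, 0 ≤ θ t i ∧ 0 ≤ g t i} with hBdef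
  have hBclosed : IsClosed B := by
    have : B = Icc (0:ℝ) T₀ ∩ ⋂ i : Fin d,
        ((Icc (0:ℝ) T₀ ∩ (fun t => θ t i) ⁻¹' Ici 0) ∩
         (Icc (0:ℝ) T₀ ∩ (fun t => g t i) ⁻¹' Ici 0)) := by
      ext t
      simp only [hBdef, mem_inter_iff, mem_iInter, mem_preimage, mem_Ici, mem_setOf_eq]
      constructor
      · rintro ⟨h1, h2⟩
        exact ⟨h1, fun i => ⟨⟨h1, (h2 i).1⟩, ⟨h1, (h2 i).2⟩⟩⟩
      · intro h
        exact ⟨h.1, fun i => ⟨(h.2 i).1.2, (h.2 i).2.2⟩⟩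
    rw [this]
    apply isClosed_Icc.inter
    apply isClosed_iInter
    intro i
    have hθc : ContinuousOn (fun t => θ t i) (Icc 0 T₀) :=
      fun t ht => (hcθ t ht.1 i).continuousWithinAt
    have hgc : ContinuousOn (fun t => g t i) (Icc 0 T₀) :=
      fun t ht => (hcg t ht.1 i).continuousWithinAt
    exact ((hθc.preimage_isClosed_of_isClosed isClosed_Icc isClosed_Ici).inter
      (hgc.preimage_isClosed_of_isClosed isClosed_Icc isClosed_Ici))
  have hAB : A ⊆ B := by
    rintro T ⟨hT1, hT2⟩
    exact ⟨hT1, hT2 T ⟨hT1.1, le_refl T⟩⟩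
  have hcB : c ∈ B := by
    have h1 : c ∈ closure A := csSup_mem_closure hne hbdd
    have h2 : closure A ⊆ B := hBclosed.closure_subset_iff.mpr hAB
    exact h2 h1
  have hcA : c ∈ A := by
    refine ⟨⟨hc0, hcT⟩, ?_⟩
    intro t ht i
    rcases lt_or_eq_of_le ht.2 with hlt | heq
    · obtain ⟨T, hTA, htT⟩ := exists_lt_of_lt_csSup hne hlt
      exact hTA.2 t ⟨ht.1, htT.le⟩ i
    · rw [heq]; exact hcB.2 i
  rcases eq_or_lt_of_le hcT with hceq | hclt
  · -- c = T₀
    intro i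
    exact hcA.2 T₀ ⟨hT₀, by rw [hceq]⟩ i
  · -- c < T₀: extend past c, contradiction
    exfalso
    have hpos := key c hc0 hcA.2
    have hev : ∀ᶠ t in nhds c, ∀ i, 0 < θ t i ∧ 0 < g t i := by
      rw [Filter.eventually_all]
      intro i
      have h1 : ∀ᶠ t in nhds c, 0 < θ t i :=
        (hcθ c hc0 i).eventually (eventually_gt_nhds (hpos i).1)
      have h2 : ∀ᶠ t in nhds c, 0 < g t i :=
        (hcg c hc0 i).eventually (eventually_gt_nhds (hpos i).2)
      exact h1.and h2
    obtain ⟨δ, hδ, hball⟩ := Metric.eventually_nhds_iff.mp hev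
    set T' : ℝ := min (c + δ/2) T₀ with hT'def
    have hcT' : c < T' := lt_min (by linarith) hclt
    have hT'A : T' ∈ A := by
      refine ⟨⟨le_trans hc0 hcT'.le, min_le_right _ _⟩, ?_⟩
      intro t ht i
      rcases le_or_gt t c with h | h
      · exact hcA.2 t ⟨ht.1, h⟩ i
      · have htd : dist t c < δ := by
          rw [Real.dist_eq, abs_of_pos (by linarith)]
          have : t ≤ c + δ/2 := le_trans ht.2 (min_le_left _ _)
          linarith
        have := hball htd i
        exact ⟨(this.1).le, (this.2).le⟩
    have : T' ≤ c := le_csSup hbdd hT'A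
    linarith

/-- Lemma 1: Under (A1) and (A2), there exists `ε₀ > 0` such that for all
`ε ∈ (0, ε₀]`, every solution of the DLN ODE starting from `θᵢ(0) = Cᵢ ε^{kᵢ}` has
nondecreasing coordinates on `[0, ∞)`. -/
theorem dln_nondecreasing (n d : ℕ) (hn : 0 < n) (hd : 0 < d)
    (X : Matrix (Fin n) (Fin d) ℝ) (y : Fin n → ℝ)
    (M : Matrix (Fin d) (Fin d) ℝ) (r : Fin d → ℝ)
    (hM : M = Xᵀ * X) (hr : r = Xᵀ *ᵥ y)
    (hA1 : ∀ i, 0 < r i)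
    (hA2 : ∀ i j, i ≠ j → M i j ≤ 0)
    (C k : Fin d → ℝ) (hC : ∀ i, 0 < C i) (hk : ∀ i, 0 < k i) :
    ∃ ε₀ > (0 : ℝ), ∀ ε ∈ Set.Ioc (0 : ℝ) ε₀, ∀ θ : ℝ → Fin d → ℝ,
      (∀ i, θ 0 i = C i * ε ^ k i) →
      (∀ t ≥ (0 : ℝ), ∀ i,
        HasDerivAt (fun τ => θ τ i) (θ t i * (r i - (M *ᵥ θ t) i)) t) →
      ∀ i, MonotoneOn (fun t => θ t i) (Set.Ici 0) := by
  -- choose ε₀ via continuity of ε ↦ ∑ j |M i j| C j ε ^ k j at 0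
  have hev : ∀ᶠ ε in nhds (0:ℝ), ∀ i, ∑ j, |M i j| * C j * ε ^ k j < r i := by
    rw [Filter.eventually_all]
    intro i
    have hcont : ContinuousAt (fun ε : ℝ => ∑ j, |M i j| * C j * ε ^ k j) 0 := by
      exact tendsto_finset_sum _ fun j _ =>
        continuousAt_const.mul (Real.continuousAt_rpow_const 0 (k j) (Or.inr (hk j).le))
    have h0 : (fun ε : ℝ => ∑ j, |M i j| * C j * ε ^ k j) 0 = 0 := by
      simp only []
      rw [Finset.sum_eq_zero]
      intro j _
      rw [Real.zero_rpow (hk j).ne', mul_zero]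
    exact hcont.eventually (by rw [h0]; exact eventually_lt_nhds (hA1 i))
  obtain ⟨δ, hδ, hball⟩ := Metric.eventually_nhds_iff.mp hev
  refine ⟨δ/2, by linarith, ?_⟩
  intro ε hε θ hθinit hθderiv i
  have hεδ : ∀ i, ∑ j, |M i j| * C j * ε ^ k j < r i := by
    apply hball
    rw [Real.dist_eq, sub_zero, abs_of_pos hε.1]
    have := hε.2; linarith
  -- initial positivity
  have hθ0 : ∀ i, 0 < θ 0 i := by
    intro i
    rw [hθinit i]
    exact mul_pos (hC i) (Real.rpow_pos_of_pos hε.1 _)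
  have hg0 : ∀ i, 0 < r i - (M *ᵥ θ 0) i := by
    intro i
    have hmv : (M *ᵥ θ 0) i = ∑ j, M i j * (C j * ε ^ k j) := by
      simp [Matrix.mulVec, dotProduct, hθinit]
    have hle : (M *ᵥ θ 0) i ≤ ∑ j, |M i j| * C j * ε ^ k j := by
      rw [hmv]
      apply Finset.sum_le_sum
      intro j _
      have h1 : 0 ≤ C j * ε ^ k j :=
        le_of_lt (mul_pos (hC j) (Real.rpow_pos_of_pos hε.1 _))
      calc M i j * (C j * ε ^ k j) ≤ |M i j| * (C j * ε ^ k j) :=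
            mul_le_mul_of_nonneg_right (le_abs_self _) h1
        _ = |M i j| * C j * ε ^ k j := by ring
    linarith [hεδ i]
  have hnn := dln_aux M r hA2 θ hθderiv hθ0 hg0
  -- conclude monotonicity
  apply monotoneOn_of_deriv_nonneg (convex_Ici 0)
  · intro t ht
    exact (hθderiv t ht i).continuousAt.continuousWithinAt
  · intro x hx
    rw [interior_Ici] at hx
    exact ((hθderiv x (le_of_lt hx) i).differentiableAt).differentiableWithinAt
  · intro x hx
    rw [interior_Ici] at hx
    rw [(hθderiv x hx.le i).deriv]
    have := hnn x hx.le
    exact mul_nonneg (this i).1 (this i).2
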